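/- arXiv:0901.4324 — 2 statements merged into one kernel-verified Lean document; each statement's English description precedes it below -/
import Mathlib

section
/- Let N ≥ 1 and let f be continuous satisfying (P) and (KO). Let u : (r₀,1) → ℝ be a strictly increasing C² function solving u''(r) + ((N−1)/r)·u'(r) = f(u(r)) for r ∈ (r₀,1) with u(r) → +∞ as r → 1⁻, and define g(r) = F(u(r)) − u'(r)²/2. Then lim_{r→1⁻} g(r)/F(u(r)) = 0; moreover, if N ≥ 2, then lim_{r→1⁻} g(r) / ( (N−1)·∫_a^{u(r)} √(2F(t)) dt ) = 1 (in particular g(r) → +∞ as r → 1⁻). -/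
open MeasureTheory Filter Metric Set Topology

set_option maxHeartbeats 1000000


private lemma my_sqrt_add_le {b c : ℝ} (hb : 0 ≤ b) (hc : 0 ≤ c) :
    Real.sqrt (b + c) ≤ Real.sqrt b + Real.sqrt c := by
  have h : b + c ≤ (Real.sqrt b + Real.sqrt c) ^ 2 := by
    nlinarith [Real.sq_sqrt hb, Real.sq_sqrt hc, Real.sqrt_nonneg b, Real.sqrt_nonneg c,
      mul_nonneg (Real.sqrt_nonneg b) (Real.sqrt_nonneg c)]
  calc Real.sqrt (b + c) ≤ Real.sqrt ((Real.sqrt b + Real.sqrt c) ^ 2) := Real.sqrt_le_sqrt h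
    _ = _ := Real.sqrt_sq (by positivity)

private lemma my_hFd {f F : ℝ → ℝ} (hf : Continuous f) {a : ℝ}
    (hF : ∀ t, F t = ∫ s in a..t, f s) : ∀ t, HasDerivAt F (f t) t := by
  intro t
  have he : F = fun t => ∫ s in a..t, f s := funext hF
  rw [he]
  exact (intervalIntegral.integral_hasStrictDerivAt_right
    (hf.intervalIntegrable a t) (hf.stronglyMeasurableAtFilter volume (nhds t))
    hf.continuousAt).hasDerivAt

private lemma my_fnonneg {f : ℝ → ℝ} {a : ℝ} (ha : 0 < f a) (hfpos : ∀ t, a < t → 0 ≤ f t) :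
    ∀ x, a ≤ x → 0 ≤ f x := by
  intro x hx
  rcases eq_or_lt_of_le hx with h | h
  · exact h ▸ ha.le
  · exact hfpos x h

private lemma my_Fmono {f F : ℝ → ℝ} (hf : Continuous f) {a : ℝ} (ha : 0 < f a)
    (hfpos : ∀ t, a < t → 0 ≤ f t) (hF : ∀ t, F t = ∫ s in a..t, f s) :
    ∀ s t, a ≤ s → s ≤ t → F s ≤ F t := by
  intro s t has hst
  have hadd : (∫ x in a..s, f x) + ∫ x in s..t, f x = ∫ x in a..t, f x :=
    intervalIntegral.integral_add_adjacent_intervals (hf.intervalIntegrable a s)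
      (hf.intervalIntegrable s t)
  have hnn : 0 ≤ ∫ x in s..t, f x := by
    apply intervalIntegral.integral_nonneg hst
    intro x hx
    exact my_fnonneg ha hfpos x (has.trans hx.1)
  rw [hF s, hF t, ← hadd]
  linarith

private lemma my_Fpos {f F : ℝ → ℝ} (hf : Continuous f) {a : ℝ} (ha : 0 < f a)
    (hfpos : ∀ t, a < t → 0 ≤ f t) (hF : ∀ t, F t = ∫ s in a..t, f s) :
    ∀ t, a < t → 0 < F t := by
  intro t hat
  have hev : ∀ᶠ x in 𝓝 a, f a / 2 < f x :=
    (hf.continuousAt (x := a)).eventually (eventually_gt_nhds (half_lt_self ha))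
  rw [Metric.eventually_nhds_iff] at hev
  obtain ⟨δ, hδ, hball⟩ := hev
  set m := min (a + δ / 2) ((a + t) / 2) with hm
  have ham : a < m := by
    apply lt_min <;> [linarith; linarith]
  have hmt : m ≤ t := (min_le_right _ _).trans (by linarith)
  have hFm : 0 < F m := by
    have hle : ∫ x in a..m, (f a / 2) ≤ ∫ x in a..m, f x := by
      apply intervalIntegral.integral_mono_on ham.le
        intervalIntegrable_const (hf.intervalIntegrable a m)
      intro x hx
      apply le_of_lt
      apply hball
      have hx1 := hx.1; have hx2 := hx.2
      have : x < a + δ := lt_of_le_of_lt hx2 (lt_of_le_of_lt (min_le_left _ _) (by linarith))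
      rw [Real.dist_eq, abs_lt]; constructor <;> linarith
    rw [intervalIntegral.integral_const] at hle
    rw [hF m]
    have : 0 < (m - a) • (f a / 2) := by
      rw [smul_eq_mul]; apply mul_pos (by linarith) (by linarith)
    linarith
  exact lt_of_lt_of_le hFm (my_Fmono hf ha hfpos hF m t ham.le hmt)

private lemma my_Ftop {f F : ℝ → ℝ} (hf : Continuous f) {a : ℝ} (ha : 0 < f a)
    (hfpos : ∀ t, a < t → 0 ≤ f t) (hF : ∀ t, F t = ∫ s in a..t, f s)
    (hKO : ∃ M, a < M ∧ IntegrableOn (fun t => 1 / Real.sqrt (F t)) (Ici M)) :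
    Tendsto F atTop atTop := by
  obtain ⟨M, haM, hint⟩ := hKO
  have hFM : 0 < F M := my_Fpos hf ha hfpos hF M haM
  rw [Filter.tendsto_atTop]
  intro b
  -- suffices to find t₀ ≥ a with b ≤ F t₀
  suffices h : ∃ t₀, a ≤ t₀ ∧ b ≤ F t₀ by
    obtain ⟨t₀, hat₀, hbt₀⟩ := h
    filter_upwards [eventually_ge_atTop t₀] with t ht
    exact hbt₀.trans (my_Fmono hf ha hfpos hF t₀ t hat₀ ht)
  by_contra hcon
  push_neg at hcon
  -- then F < b on Ici M, so 1/√F ≥ 1/√b > 0 on Ici M, contradicting integrability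
  have hbpos : 0 < b := lt_trans hFM (hcon M haM.le)
  set c : ℝ := 1 / Real.sqrt b with hc
  have hcpos : 0 < c := by
    rw [hc]; positivity
  have hle : ∀ t ∈ Ici M, c ≤ 1 / Real.sqrt (F t) := by
    intro t ht
    have hFt : 0 < F t := lt_of_lt_of_le hFM (my_Fmono hf ha hfpos hF M t haM.le ht)
    have hFtb : F t < b := hcon t (haM.le.trans ht)
    apply one_div_le_one_div_of_le (Real.sqrt_pos.2 hFt)
    exact Real.sqrt_le_sqrt hFtb.le
  have hintc : Integrable (fun _ : ℝ => c) (volume.restrict (Ici M)) := by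
    apply Integrable.mono hint aestronglyMeasurable_const
    rw [ae_restrict_iff' measurableSet_Ici]
    filter_upwards with t ht
    rw [Real.norm_eq_abs, Real.norm_eq_abs, abs_of_pos hcpos, abs_of_nonneg (by positivity)]
    exact hle t ht
  rw [integrable_const_iff] at hintc
  rcases hintc with h | h
  · exact hcpos.ne' h
  · have h := measure_lt_top (volume.restrict (Ici M)) univ
    rw [Measure.restrict_apply_univ, Real.volume_Ici] at h
    exact (lt_irrefl _ h).elim

private lemma my_lemA {f F : ℝ → ℝ} (hf : Continuous f) {a : ℝ} (ha : 0 < f a)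
    (hfpos : ∀ t, a < t → 0 ≤ f t) (hF : ∀ t, F t = ∫ s in a..t, f s)
    (hKO : ∃ M, a < M ∧ IntegrableOn (fun t => 1 / Real.sqrt (F t)) (Ici M)) :
    Tendsto (fun T => (∫ t in a..T, Real.sqrt (2 * F t)) / F T) atTop (nhds 0) := by
  have hFc : Continuous F := by
    rw [continuous_iff_continuousAt]; exact fun t => (my_hFd hf hF t).continuousAt
  have hsq : Continuous (fun t => Real.sqrt (2 * F t)) := (continuous_const.mul hFc).sqrt
  have hFtop : Tendsto F atTop atTop := my_Ftop hf ha hfpos hF hKO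
  obtain ⟨M, haM, hint⟩ := hKO
  have hFmono := my_Fmono hf ha hfpos hF
  have hFpos := my_Fpos hf ha hfpos hF
  have hIoi : IntegrableOn (fun t => 1 / Real.sqrt (F t)) (Ioi M) :=
    hint.mono_set Ioi_subset_Ici_self
  set I := ∫ t in Ioi M, 1 / Real.sqrt (F t) with hI
  have htail : Tendsto (fun S => ∫ t in M..S, 1 / Real.sqrt (F t)) atTop (nhds I) :=
    intervalIntegral_tendsto_integral_Ioi M hIoi tendsto_id
  -- continuity of 1/√F on [M,∞)
  have hicont : ∀ {s t : ℝ}, M ≤ s → s ≤ t →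
      IntervalIntegrable (fun t => 1 / Real.sqrt (F t)) volume s t := by
    intro s t hMs hst
    apply ContinuousOn.intervalIntegrable
    rw [uIcc_of_le hst]
    apply ContinuousOn.div continuousOn_const (hFc.continuousOn.sqrt)
    intro x hx
    exact ne_of_gt (Real.sqrt_pos.2 (hFpos x (lt_of_lt_of_le haM (hMs.trans hx.1))))
  rw [Metric.tendsto_nhds]
  intro ε hε
  obtain ⟨S, hS1, hS2⟩ :=
    ((htail.eventually (Metric.ball_mem_nhds I (by positivity : (0:ℝ) < ε/8))).and
      (eventually_ge_atTop (max M a))).exists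
  have hMS : M ≤ S := le_trans (le_max_left _ _) hS2
  have haS : a ≤ S := le_trans (le_max_right _ _) hS2
  set φS := ∫ t in a..S, Real.sqrt (2 * F t) with hφS
  have htailS : 0 ≤ I - ∫ t in M..S, 1 / Real.sqrt (F t) := by
    have : (∫ t in M..S, 1 / Real.sqrt (F t)) ≤ I := by
      rw [intervalIntegral.integral_of_le hMS]
      apply setIntegral_mono_set hIoi
      · filter_upwards with t using by positivity
      · exact HasSubset.Subset.eventuallyLE Ioc_subset_Ioi_self
    linarith
  have htailS' : I - (∫ t in M..S, 1 / Real.sqrt (F t)) < ε/8 := by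
    have := hS1
    rw [Real.dist_eq, abs_lt] at this
    linarith [this.1]
  filter_upwards [eventually_ge_atTop S, hFtop.eventually_ge_atTop 1,
    hFtop.eventually_ge_atTop (φS * (4/ε))] with T hST hFT1 hFTφ
  have hFTpos : (0:ℝ) < F T := lt_of_lt_of_le one_pos hFT1
  -- bound the piece from S to T
  have key : (∫ t in S..T, Real.sqrt (2 * F t)) ≤
      Real.sqrt 2 * F T * (I - ∫ t in M..S, 1 / Real.sqrt (F t)) := by
    have h1 : (∫ t in S..T, Real.sqrt (2 * F t)) ≤
        ∫ t in S..T, Real.sqrt 2 * F T * (1 / Real.sqrt (F t)) := by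
      apply intervalIntegral.integral_mono_on hST (hsq.intervalIntegrable _ _)
        ((hicont hMS hST).const_mul _)
      intro x hx
      have hFx : 0 < F x := hFpos x (lt_of_lt_of_le haM (hMS.trans hx.1))
      have hFxT : F x ≤ F T := hFmono x T (haS.trans hx.1) hx.2
      rw [Real.sqrt_mul (by norm_num : (0:ℝ) ≤ 2)]
      have hsx : 0 < Real.sqrt (F x) := Real.sqrt_pos.2 hFx
      have : Real.sqrt (F x) ≤ F T * (1 / Real.sqrt (F x)) := by
        rw [mul_one_div, le_div_iff₀ hsx, Real.mul_self_sqrt hFx.le]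
        exact hFxT
      calc Real.sqrt 2 * Real.sqrt (F x) ≤ Real.sqrt 2 * (F T * (1 / Real.sqrt (F x))) :=
            mul_le_mul_of_nonneg_left this (Real.sqrt_nonneg 2)
        _ = Real.sqrt 2 * F T * (1 / Real.sqrt (F x)) := by ring
    have h2 : (∫ t in S..T, Real.sqrt 2 * F T * (1 / Real.sqrt (F t))) =
        Real.sqrt 2 * F T * ∫ t in S..T, 1 / Real.sqrt (F t) := by
      rw [← intervalIntegral.integral_const_mul]
    have h3 : (∫ t in S..T, 1 / Real.sqrt (F t)) =
        (∫ t in M..T, 1 / Real.sqrt (F t)) - ∫ t in M..S, 1 / Real.sqrt (F t) := by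
      have := intervalIntegral.integral_add_adjacent_intervals (hicont (le_refl M) hMS)
        (hicont hMS hST) (a := M) (b := S) (c := T)
      linarith
    have h4 : (∫ t in M..T, 1 / Real.sqrt (F t)) ≤ I := by
      rw [intervalIntegral.integral_of_le (hMS.trans hST)]
      apply setIntegral_mono_set hIoi
      · filter_upwards with t using by positivity
      · exact HasSubset.Subset.eventuallyLE Ioc_subset_Ioi_self
    have hs2 : (0:ℝ) ≤ Real.sqrt 2 := Real.sqrt_nonneg 2
    have h5 := h1
    rw [h2, h3] at h5
    nlinarith [mul_le_mul_of_nonneg_left (sub_le_sub_right h4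
      (∫ t in M..S, 1 / Real.sqrt (F t))) (mul_nonneg hs2 hFTpos.le)]
  -- conclude
  have hφT : φS + (∫ t in S..T, Real.sqrt (2 * F t)) = ∫ t in a..T, Real.sqrt (2 * F t) :=
    intervalIntegral.integral_add_adjacent_intervals (hsq.intervalIntegrable a S)
      (hsq.intervalIntegrable S T)
  have hφTnn : 0 ≤ ∫ t in a..T, Real.sqrt (2 * F t) :=
    intervalIntegral.integral_nonneg (haS.trans hST) (fun x _ => Real.sqrt_nonneg _)
  have h2le : Real.sqrt 2 ≤ 2 := by
    nlinarith [Real.sq_sqrt (show (0:ℝ) ≤ 2 by norm_num), Real.sqrt_nonneg 2]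
  have hsmall : (∫ t in S..T, Real.sqrt (2 * F t)) ≤ ε/4 * F T := by
    have hnn : 0 ≤ I - ∫ t in M..S, 1 / Real.sqrt (F t) := htailS
    nlinarith [key, mul_le_mul_of_nonneg_right h2le (mul_nonneg hFTpos.le hnn),
      mul_le_mul_of_nonneg_left htailS'.le (by positivity : (0:ℝ) ≤ 2 * F T)]
  have hφSle : φS ≤ ε/4 * F T := by
    have h4ε : φS * (4/ε) * (ε/4) = φS := by field_simp
    have := mul_le_mul_of_nonneg_right hFTφ (show (0:ℝ) ≤ ε/4 by positivity)
    rw [h4ε] at this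
    linarith
  rw [Real.dist_eq, sub_zero, abs_of_nonneg (div_nonneg hφTnn hFTpos.le), div_lt_iff₀ hFTpos]
  nlinarith

private lemma my_phi_lower {f F : ℝ → ℝ} (hf : Continuous f) {a : ℝ} (ha : 0 < f a)
    (hfpos : ∀ t, a < t → 0 ≤ f t) (hF : ∀ t, F t = ∫ s in a..t, f s)
    (hKO : ∃ M, a < M ∧ IntegrableOn (fun t => 1 / Real.sqrt (F t)) (Ici M)) :
    ∃ S₁, a ≤ S₁ ∧ ∀ T, S₁ ≤ T →
      (T - S₁) + (∫ t in a..S₁, Real.sqrt (2 * F t)) ≤ ∫ t in a..T, Real.sqrt (2 * F t) := by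
  have hFc : Continuous F := by
    rw [continuous_iff_continuousAt]; exact fun t => (my_hFd hf hF t).continuousAt
  have hsq : Continuous (fun t => Real.sqrt (2 * F t)) := (continuous_const.mul hFc).sqrt
  have hFtop : Tendsto F atTop atTop := my_Ftop hf ha hfpos hF hKO
  obtain ⟨S₁, hS₁⟩ := ((hFtop.eventually_ge_atTop 1).and (eventually_ge_atTop a)).exists
  refine ⟨S₁, hS₁.2, fun T hT => ?_⟩
  have hmono := my_Fmono hf ha hfpos hF
  have h1 : (T - S₁) ≤ ∫ t in S₁..T, Real.sqrt (2 * F t) := by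
    have : (∫ (_ : ℝ) in S₁..T, (1:ℝ)) ≤ ∫ t in S₁..T, Real.sqrt (2 * F t) := by
      apply intervalIntegral.integral_mono_on hT intervalIntegrable_const
        (hsq.intervalIntegrable _ _)
      intro x hx
      have hFx : 1 ≤ F x := hS₁.1.trans (hmono S₁ x hS₁.2 hx.1)
      have := Real.sqrt_le_sqrt (show (1:ℝ) ≤ 2 * F x by linarith)
      rwa [Real.sqrt_one] at this
    simpa using this
  have hadd : (∫ t in a..S₁, Real.sqrt (2 * F t)) + (∫ t in S₁..T, Real.sqrt (2 * F t))
      = ∫ t in a..T, Real.sqrt (2 * F t) :=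
    intervalIntegral.integral_add_adjacent_intervals (hsq.intervalIntegrable _ _)
      (hsq.intervalIntegrable _ _)
  linarith

private lemma my_phiTop {f F : ℝ → ℝ} (hf : Continuous f) {a : ℝ} (ha : 0 < f a)
    (hfpos : ∀ t, a < t → 0 ≤ f t) (hF : ∀ t, F t = ∫ s in a..t, f s)
    (hKO : ∃ M, a < M ∧ IntegrableOn (fun t => 1 / Real.sqrt (F t)) (Ici M)) :
    Tendsto (fun T => ∫ t in a..T, Real.sqrt (2 * F t)) atTop atTop := by
  obtain ⟨S₁, haS₁, hS₁⟩ := my_phi_lower hf ha hfpos hF hKO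
  apply tendsto_atTop_mono' atTop
    ((eventually_ge_atTop S₁).mono fun T hT => hS₁ T hT)
  exact tendsto_atTop_add_const_right _ _ (tendsto_atTop_add_const_right _ _ tendsto_id)

private lemma my_lemA' {f F : ℝ → ℝ} (hf : Continuous f) {a : ℝ} (ha : 0 < f a)
    (hfpos : ∀ t, a < t → 0 ≤ f t) (hF : ∀ t, F t = ∫ s in a..t, f s)
    (hKO : ∃ M, a < M ∧ IntegrableOn (fun t => 1 / Real.sqrt (F t)) (Ici M)) :
    Tendsto (fun T => T / F T) atTop (nhds 0) := by
  have hFtop : Tendsto F atTop atTop := my_Ftop hf ha hfpos hF hKO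
  obtain ⟨S₁, haS₁, hS₁⟩ := my_phi_lower hf ha hfpos hF hKO
  have hup : Tendsto (fun T => (∫ t in a..T, Real.sqrt (2 * F t)) / F T
      + (S₁ - (∫ t in a..S₁, Real.sqrt (2 * F t))) / F T) atTop (nhds 0) := by
    have := (my_lemA hf ha hfpos hF hKO).add
      ((tendsto_const_nhds (x := S₁ - (∫ t in a..S₁, Real.sqrt (2 * F t)))).div_atTop hFtop)
    simpa using this
  apply tendsto_of_tendsto_of_tendsto_of_le_of_le' tendsto_const_nhds hup
  · filter_upwards [eventually_ge_atTop (0:ℝ), hFtop.eventually_ge_atTop 1] with T hT hFT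
    positivity
  · filter_upwards [eventually_ge_atTop S₁, hFtop.eventually_ge_atTop 1] with T hT hFT
    have h := hS₁ T hT
    have hFTpos : (0:ℝ) < F T := lt_of_lt_of_le one_pos hFT
    rw [← add_div, div_le_div_iff₀ hFTpos hFTpos]
    nlinarith


private lemma eps_sqrt_up {e : ℝ} (he : 0 ≤ e) : Real.sqrt (1+e) ≤ 1+e := by
  have h := Real.sqrt_le_sqrt (show (1+e) ≤ (1+e)^2 by nlinarith)
  rwa [Real.sqrt_sq (by linarith)] at h

private lemma eps_sqrt_low {e : ℝ} (he0 : 0 ≤ e) (he : e ≤ 1/2) :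
    1 - e ≤ Real.sqrt (1-e) := by
  rw [Real.le_sqrt (by linarith) (by linarith)]
  nlinarith

private lemma eps_const_up {e r : ℝ} (he0 : 0 < e) (he : e ≤ 1/2) (hr : 1 - e < r) :
    Real.sqrt (1+e) / r ≤ 1 + 4*e := by
  have h1 : Real.sqrt (1+e) / r ≤ (1+e)/(1-e) :=
    div_le_div₀ (by linarith) (eps_sqrt_up he0.le) (by linarith) (by linarith)
  have h2 : (1+e)/(1-e) ≤ 1 + 4*e := by
    rw [div_le_iff₀ (by linarith)]
    nlinarith
  linarith

private lemma my_ptw {Nr x re d Fv gv e : ℝ} (hNr : 0 ≤ Nr)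
    (hre : 0 < re) (hxlow : re ≤ x) (hx1 : x ≤ 1) (hd0 : 0 ≤ d) (hFv : 1 ≤ Fv)
    (he0 : 0 < e) (habs : |gv| ≤ e * Fv) (hgv : gv = Fv - d^2/2) :
    Nr * (Real.sqrt (1-e) * (d * Real.sqrt (2*Fv))) ≤ Nr/x * d^2 ∧
    Nr/x * d^2 ≤ Nr/re * (Real.sqrt (1+e) * (d * Real.sqrt (2*Fv))) := by
  have hx0 : 0 < x := lt_of_lt_of_le hre hxlow
  obtain ⟨ha1, ha2⟩ := abs_le.1 habs
  have hd2low : (1-e) * (2*Fv) ≤ d^2 := by nlinarith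
  have hd2up : d^2 ≤ (1+e) * (2*Fv) := by nlinarith
  have hdup : d ≤ Real.sqrt (1+e) * Real.sqrt (2*Fv) := by
    rw [← Real.sqrt_mul (by linarith : (0:ℝ) ≤ 1+e)]
    exact Real.le_sqrt_of_sq_le hd2up
  have hdlow : Real.sqrt (1-e) * Real.sqrt (2*Fv) ≤ d := by
    rcases le_or_gt (1-e) 0 with h | h
    · have h1 : Real.sqrt (1-e) = 0 := Real.sqrt_eq_zero_of_nonpos h
      rw [h1, zero_mul]; exact hd0
    · rw [← Real.sqrt_mul h.le]
      have h2 := Real.sqrt_le_sqrt hd2low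
      rwa [Real.sqrt_sq hd0] at h2
  constructor
  · have step1 : Real.sqrt (1-e) * (d * Real.sqrt (2*Fv)) ≤ d^2 := by
      have h1 : d * (Real.sqrt (1-e) * Real.sqrt (2*Fv)) ≤ d * d :=
        mul_le_mul_of_nonneg_left hdlow hd0
      have h2 : Real.sqrt (1-e) * (d * Real.sqrt (2*Fv))
          = d * (Real.sqrt (1-e) * Real.sqrt (2*Fv)) := by ring
      rw [h2, pow_two]; exact h1
    have step2 := mul_le_mul_of_nonneg_left step1 hNr
    have step3 : Nr ≤ Nr/x := by
      have := div_le_div_of_nonneg_left hNr hx0 hx1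
      rwa [div_one] at this
    have step4 := mul_le_mul_of_nonneg_right step3 (sq_nonneg d)
    linarith
  · have step1 : d^2 ≤ Real.sqrt (1+e) * (d * Real.sqrt (2*Fv)) := by
      have h1 : d * d ≤ d * (Real.sqrt (1+e) * Real.sqrt (2*Fv)) :=
        mul_le_mul_of_nonneg_left hdup hd0
      have h2 : Real.sqrt (1+e) * (d * Real.sqrt (2*Fv))
          = d * (Real.sqrt (1+e) * Real.sqrt (2*Fv)) := by ring
      rw [h2, pow_two]; exact h1
    have step3 : Nr/x ≤ Nr/re := div_le_div_of_nonneg_left hNr hre hxlow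
    have step4 := mul_le_mul_of_nonneg_right step3 (sq_nonneg d)
    have step5 := mul_le_mul_of_nonneg_left step1 (div_nonneg hNr hre.le)
    linarith


theorem stmt16 {N : ℕ} (hN : 1 ≤ N)
    (f : ℝ → ℝ) (hf : Continuous f)
    (a : ℝ) (ha : 0 < f a) (hfpos : ∀ t, a < t → 0 ≤ f t)
    (F : ℝ → ℝ) (hF : ∀ t, F t = ∫ s in a..t, f s)
    (hKO : ∃ M, a < M ∧ IntegrableOn (fun t => 1 / Real.sqrt (F t)) (Ici M))
    (r₀ : ℝ) (hr₀ : 0 ≤ r₀) (hr₀1 : r₀ < 1)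
    (u : ℝ → ℝ)
    (huC2 : ContDiffOn ℝ 2 u (Ioo r₀ 1))
    (humono : StrictMonoOn u (Ioo r₀ 1))
    (huode : ∀ r ∈ Ioo r₀ 1,
      deriv (deriv u) r + ((N : ℝ) - 1) / r * deriv u r = f (u r))
    (hublow : Tendsto u (nhdsWithin 1 (Iio 1)) atTop)
    (g : ℝ → ℝ) (hg : ∀ r, g r = F (u r) - (deriv u r) ^ 2 / 2) :
    Tendsto (fun r => g r / F (u r)) (nhdsWithin 1 (Iio 1)) (nhds 0) ∧
    (2 ≤ N →
      Tendsto (fun r => g r / (((N : ℝ) - 1) * ∫ t in a..(u r), Real.sqrt (2 * F t)))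
        (nhdsWithin 1 (Iio 1)) (nhds 1)) := by
  have hFc : Continuous F := by
    rw [continuous_iff_continuousAt]; exact fun t => (my_hFd hf hF t).continuousAt
  have hsqc : Continuous (fun t => Real.sqrt (2 * F t)) := (continuous_const.mul hFc).sqrt
  have hFmono := my_Fmono hf ha hfpos hF
  have hFpos := my_Fpos hf ha hfpos hF
  set l := nhdsWithin (1:ℝ) (Iio 1) with hl
  set s : Set ℝ := Ioo r₀ 1 with hs
  have hos : IsOpen s := isOpen_Ioo
  have hN1 : (0:ℝ) ≤ (N:ℝ) - 1 := by
    have : (1:ℝ) ≤ (N:ℝ) := by exact_mod_cast hN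
    linarith
  -- basic differentiability facts
  have hud : ∀ r ∈ s, HasDerivAt u (deriv u r) r := fun r hr =>
    ((huC2.differentiableOn (by norm_num)).differentiableAt (hos.mem_nhds hr)).hasDerivAt
  have hu'c1 : ContDiffOn ℝ 1 (deriv u) s := huC2.deriv_of_isOpen hos (by norm_num)
  have hu'cont : ContinuousOn (deriv u) s := hu'c1.continuousOn
  have hu'd : ∀ r ∈ s, HasDerivAt (deriv u) (deriv (deriv u) r) r := fun r hr =>
    ((hu'c1.differentiableOn (by norm_num)).differentiableAt (hos.mem_nhds hr)).hasDerivAt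
  have hucont : ContinuousOn u s := huC2.continuousOn
  -- nonnegativity of deriv u
  have hu'nn : ∀ r ∈ s, 0 ≤ deriv u r := by
    intro r hr
    have hslope : Tendsto (slope u r) (𝓝[>] r) (𝓝 (deriv u r)) :=
      ((hasDerivAt_iff_tendsto_slope).1 (hud r hr)).mono_left
        (nhdsWithin_mono r (fun x hx => ne_of_gt hx))
    apply ge_of_tendsto hslope
    filter_upwards [Ioo_mem_nhdsGT_of_mem (Set.left_mem_Ico.2 hr.2)] with x hx
    have hxs : x ∈ s := ⟨hr.1.trans hx.1, hx.2⟩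
    rw [slope_def_field]
    apply div_nonneg _ (by linarith [hx.1])
    have := humono hr hxs hx.1
    linarith
  -- derivative of g
  have hgd : ∀ r ∈ s, HasDerivAt g (((N:ℝ)-1)/r * (deriv u r)^2) r := by
    intro r hr
    have h1 : HasDerivAt (fun r => F (u r)) (f (u r) * deriv u r) r :=
      (my_hFd hf hF (u r)).comp r (hud r hr)
    have h2 : HasDerivAt (fun r => (deriv u r)^2 / 2)
        (deriv u r * deriv (deriv u) r) r := by
      have := ((hu'd r hr).pow 2).div_const 2
      refine this.congr_deriv ?_
      ring
    have h3 := h1.sub h2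
    have he : g = fun r => F (u r) - (deriv u r)^2/2 := funext hg
    rw [he]
    refine h3.congr_deriv ?_
    have hode := huode r hr
    rw [← hode]
    ring
  -- monotonicity of g
  have hgcont : ContinuousOn g s := by
    intro x hx
    exact ((hgd x hx).continuousAt).continuousWithinAt
  have hgmono : MonotoneOn g s := by
    apply monotoneOn_of_deriv_nonneg (convex_Ioo _ _) hgcont
    · intro x hx
      rw [interior_Ioo] at hx
      exact ((hgd x hx).differentiableAt).differentiableWithinAt
    · intro x hx
      rw [interior_Ioo] at hx
      rw [(hgd x hx).deriv]
      have hx0 : 0 < x := lt_of_le_of_lt hr₀ hx.1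
      positivity
  -- eventual facts
  have hmem_l : s ∈ l := Ioo_mem_nhdsLT_of_mem (Set.right_mem_Ioc.2 hr₀1)
  have hevua : ∀ᶠ r in l, a < u r := hublow.eventually_gt_atTop a
  have hFuTop : Tendsto (fun r => F (u r)) l atTop := (my_Ftop hf ha hfpos hF hKO).comp hublow
  have hphiuTop : Tendsto (fun r => ∫ t in a..(u r), Real.sqrt (2 * F t)) l atTop :=
    (my_phiTop hf ha hfpos hF hKO).comp hublow
  have hevs : ∀ᶠ r in l, r ∈ s := hmem_l
  haveI hneb : l.NeBot := by rw [hl]; infer_instance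
  set φ : ℝ → ℝ := fun T => ∫ t in a..T, Real.sqrt (2 * F t) with hφdef
  -- choose r₁
  obtain ⟨r₁, hr₁s, hr₁a⟩ := (hevs.and hevua).exists
  have hr₁0 : 0 < r₁ := lt_of_le_of_lt hr₀ hr₁s.1
  set K := ((N:ℝ)-1)/r₁ with hK
  have hK0 : 0 ≤ K := div_nonneg hN1 hr₁0.le
  set C := max 0 (-(g r₁)) with hC
  have hC0 : 0 ≤ C := le_max_left _ _
  have hgC : -C ≤ g r₁ := neg_le.mpr (le_max_right _ _)
  set B := |φ (u r₁)| + Real.sqrt (2*C) * |u r₁| with hB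
  -- the main upper bound for g
  have claim : ∀ r ∈ Ioo r₁ 1,
      g r ≤ g r₁ + K * (φ (u r) + Real.sqrt (2*C) * u r + B) := by
    intro r hr
    have hrs : r ∈ s := ⟨hr₁s.1.trans hr.1, hr.2⟩
    have hr₁r : r₁ ≤ r := hr.1.le
    have hIcc : Icc r₁ r ⊆ s := fun x hx => ⟨lt_of_lt_of_le hr₁s.1 hx.1, lt_of_le_of_lt hx.2 hr.2⟩
    -- FTC for g
    have hcont1 : ContinuousOn (fun x => ((N:ℝ)-1)/x * (deriv u x)^2) (Icc r₁ r) := by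
      apply ContinuousOn.mul
      · exact continuousOn_const.div continuousOn_id
          (fun x hx => ne_of_gt (lt_of_lt_of_le hr₁0 hx.1))
      · exact (hu'cont.mono hIcc).pow 2
    have hftc : ∫ x in r₁..r, ((N:ℝ)-1)/x * (deriv u x)^2 = g r - g r₁ := by
      apply intervalIntegral.integral_eq_sub_of_hasDerivAt
      · rw [uIcc_of_le hr₁r]; exact fun x hx => hgd x (hIcc hx)
      · apply ContinuousOn.intervalIntegrable; rw [uIcc_of_le hr₁r]; exact hcont1
    -- pointwise bound
    have hptw : ∀ x ∈ Icc r₁ r, ((N:ℝ)-1)/x * (deriv u x)^2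
        ≤ K * (deriv u x * Real.sqrt (2 * F (u x) + 2*C)) := by
      intro x hx
      have hxs := hIcc hx
      have hd0 : 0 ≤ deriv u x := hu'nn x hxs
      have hgx : g r₁ ≤ g x := hgmono hr₁s hxs hx.1
      have hgdef := hg x
      have hd2 : (deriv u x)^2 ≤ 2 * F (u x) + 2*C := by nlinarith
      have hdle : deriv u x ≤ Real.sqrt (2 * F (u x) + 2*C) := Real.le_sqrt_of_sq_le hd2
      have hdiv : ((N:ℝ)-1)/x ≤ K := div_le_div_of_nonneg_left hN1 hr₁0 hx.1
      calc ((N:ℝ)-1)/x * (deriv u x)^2 ≤ K * (deriv u x)^2 :=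
            mul_le_mul_of_nonneg_right hdiv (sq_nonneg _)
        _ ≤ K * (deriv u x * Real.sqrt (2 * F (u x) + 2*C)) := by
            apply mul_le_mul_of_nonneg_left _ hK0
            rw [pow_two]
            exact mul_le_mul_of_nonneg_left hdle hd0
    -- substitution
    have hwcont : Continuous (fun t => Real.sqrt (2 * F t + 2*C)) :=
      ((continuous_const.mul hFc).add continuous_const).sqrt
    have hsub : ∫ x in r₁..r, deriv u x * Real.sqrt (2 * F (u x) + 2*C)
        = ∫ t in (u r₁)..(u r), Real.sqrt (2 * F t + 2*C) := by
      have h := intervalIntegral.integral_comp_smul_deriv (f := u) (f' := deriv u)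
        (g := fun t => Real.sqrt (2 * F t + 2*C)) (a := r₁) (b := r)
        (by rw [uIcc_of_le hr₁r]; exact fun x hx => hud x (hIcc hx))
        (by rw [uIcc_of_le hr₁r]; exact hu'cont.mono hIcc) hwcont
      simpa [smul_eq_mul, Function.comp] using h
    have hintc2 : ContinuousOn (fun x => K * (deriv u x * Real.sqrt (2 * F (u x) + 2*C)))
        (Icc r₁ r) := by
      apply ContinuousOn.mul continuousOn_const
      exact (hu'cont.mono hIcc).mul ((hwcont.comp_continuousOn (hucont.mono hIcc)))
    have hmono2 : ∫ x in r₁..r, ((N:ℝ)-1)/x * (deriv u x)^2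
        ≤ K * ∫ t in (u r₁)..(u r), Real.sqrt (2 * F t + 2*C) := by
      calc ∫ x in r₁..r, ((N:ℝ)-1)/x * (deriv u x)^2
          ≤ ∫ x in r₁..r, K * (deriv u x * Real.sqrt (2 * F (u x) + 2*C)) := by
            apply intervalIntegral.integral_mono_on hr₁r _ _ hptw
            · apply ContinuousOn.intervalIntegrable; rw [uIcc_of_le hr₁r]; exact hcont1
            · apply ContinuousOn.intervalIntegrable; rw [uIcc_of_le hr₁r]; exact hintc2
        _ = K * ∫ x in r₁..r, deriv u x * Real.sqrt (2 * F (u x) + 2*C) := by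
            rw [← intervalIntegral.integral_const_mul]
        _ = K * ∫ t in (u r₁)..(u r), Real.sqrt (2 * F t + 2*C) := by rw [hsub]
    have hur : u r₁ ≤ u r := (humono hr₁s hrs hr.1).le
    have hcmp : ∫ t in (u r₁)..(u r), Real.sqrt (2 * F t + 2*C)
        ≤ ∫ t in (u r₁)..(u r), (Real.sqrt (2 * F t) + Real.sqrt (2*C)) := by
      apply intervalIntegral.integral_mono_on hur (hwcont.intervalIntegrable _ _)
        ((hsqc.add continuous_const).intervalIntegrable _ _)
      intro t ht
      have hat : a < t := lt_of_lt_of_le hr₁a ht.1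
      have hFt : 0 < F t := hFpos t hat
      exact my_sqrt_add_le (by linarith) (by linarith)
    have hadj : φ (u r₁) + (∫ t in (u r₁)..(u r), Real.sqrt (2 * F t)) = φ (u r) :=
      intervalIntegral.integral_add_adjacent_intervals (hsqc.intervalIntegrable _ _)
        (hsqc.intervalIntegrable _ _)
    have hsplit : ∫ t in (u r₁)..(u r), (Real.sqrt (2 * F t) + Real.sqrt (2*C))
        = (φ (u r) - φ (u r₁)) + Real.sqrt (2*C) * (u r - u r₁) := by
      rw [intervalIntegral.integral_add (hsqc.intervalIntegrable _ _) intervalIntegrable_const,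
        intervalIntegral.integral_const, smul_eq_mul]
      have h5 : ∫ t in (u r₁)..(u r), Real.sqrt (2 * F t) = φ (u r) - φ (u r₁) := by
        linarith
      rw [h5]; ring
    have hinner : (φ (u r) - φ (u r₁)) + Real.sqrt (2*C) * (u r - u r₁)
        ≤ φ (u r) + Real.sqrt (2*C) * u r + B := by
      have h1 := neg_abs_le (φ (u r₁))
      have h2 := mul_le_mul_of_nonneg_left (neg_abs_le (u r₁)) (Real.sqrt_nonneg (2*C))
      rw [hB]; nlinarith [Real.sqrt_nonneg (2*C)]
    have hKinner := mul_le_mul_of_nonneg_left hinner hK0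
    have hKcmp := mul_le_mul_of_nonneg_left hcmp hK0
    rw [hsplit] at hKcmp
    linarith
  ----------------------------------------------------------------
  -- Part 1
  have hup : Tendsto (fun r => (g r₁ + K*B)/F (u r) + K*(φ (u r)/F (u r))
      + (K*Real.sqrt (2*C))*(u r/F (u r))) l (nhds 0) := by
    have t1 : Tendsto (fun r => (g r₁ + K*B)/F (u r)) l (nhds 0) :=
      tendsto_const_nhds.div_atTop hFuTop
    have t2 : Tendsto (fun r => φ (u r)/F (u r)) l (nhds 0) :=
      (my_lemA hf ha hfpos hF hKO).comp hublow
    have t3 : Tendsto (fun r => u r/F (u r)) l (nhds 0) :=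
      (my_lemA' hf ha hfpos hF hKO).comp hublow
    have := (t1.add (t2.const_mul K)).add (t3.const_mul (K*Real.sqrt (2*C)))
    simpa [mul_comm] using this
  have hlow : Tendsto (fun r => g r₁ / F (u r)) l (nhds 0) :=
    tendsto_const_nhds.div_atTop hFuTop
  have hIoo_r₁ : Ioo r₁ 1 ∈ l := Ioo_mem_nhdsLT_of_mem (Set.right_mem_Ioc.2 hr₁s.2)
  have part1 : Tendsto (fun r => g r / F (u r)) l (nhds 0) := by
    apply tendsto_of_tendsto_of_tendsto_of_le_of_le' hlow hup
    · filter_upwards [hIoo_r₁, hFuTop.eventually_ge_atTop 1] with r hr hF1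
      have hrs : r ∈ s := ⟨hr₁s.1.trans hr.1, hr.2⟩
      have hmono := hgmono hr₁s hrs hr.1.le
      have hFpos' : (0:ℝ) < F (u r) := lt_of_lt_of_le one_pos hF1
      exact (div_le_div_iff_of_pos_right hFpos').2 hmono
    · filter_upwards [hIoo_r₁, hFuTop.eventually_ge_atTop 1] with r hr hF1
      have hclaim := claim r hr
      have hFpos' : (0:ℝ) < F (u r) := lt_of_lt_of_le one_pos hF1
      have heq : (g r₁ + K*B)/F (u r) + K*(φ (u r)/F (u r))
          + (K*Real.sqrt (2*C))*(u r/F (u r))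
          = (g r₁ + K * (φ (u r) + Real.sqrt (2*C) * u r + B))/F (u r) := by ring
      rw [heq]
      exact (div_le_div_iff_of_pos_right hFpos').2 hclaim
  refine ⟨part1, ?_⟩
  intro hN2
  have hN1' : (1:ℝ) ≤ (N:ℝ) - 1 := by
    have : (2:ℝ) ≤ (N:ℝ) := by exact_mod_cast hN2
    linarith
  have hN1pos : (0:ℝ) < (N:ℝ) - 1 := lt_of_lt_of_le one_pos hN1'
  have hN0 : ((N:ℝ) - 1) ≠ 0 := ne_of_gt hN1pos
  have hDtop : Tendsto (fun r => ((N:ℝ)-1) * φ (u r)) l atTop :=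
    hphiuTop.const_mul_atTop hN1pos
  rw [Metric.tendsto_nhds]
  intro δ hδ
  set ε := min (δ/8) (1/2) with hε
  have hε0 : 0 < ε := lt_min (by linarith) (by norm_num)
  have hεδ : ε ≤ δ/8 := min_le_left _ _
  have hεhalf : ε ≤ 1/2 := min_le_right _ _
  -- the eventual good set
  have hE : ∀ᶠ r in l, r ∈ s ∧ a < u r ∧ |g r / F (u r)| ≤ ε ∧ 1 ≤ F (u r) ∧ 1 - ε < r := by
    have h1 : ∀ᶠ r in l, |g r / F (u r)| ≤ ε := by
      have hp := part1
      rw [Metric.tendsto_nhds] at hp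
      filter_upwards [hp ε hε0] with r hr
      rw [Real.dist_eq, sub_zero] at hr; exact hr.le
    have h2 : ∀ᶠ r in l, 1 - ε < r := by
      filter_upwards [Ioo_mem_nhdsLT_of_mem
        (show (1:ℝ) ∈ Ioc (1-ε) 1 from ⟨by linarith, le_refl _⟩)] with r hr
      exact hr.1
    filter_upwards [hevs, hevua, h1, hFuTop.eventually_ge_atTop 1, h2] with r p1 p2 p3 p4 p5
    exact ⟨p1, p2, p3, p4, p5⟩
  rw [eventually_iff] at hE
  obtain ⟨c, hc1, hcsub⟩ := mem_nhdsLT_iff_exists_Ioo_subset.1 hE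
  rw [mem_Iio] at hc1
  set rε := (c + 1)/2 with hrεdef
  have hrεmem : rε ∈ Ioo c 1 := ⟨by rw [hrεdef]; linarith, by rw [hrεdef]; linarith⟩
  obtain ⟨hrεs, hrεa, hrεq, hrεF, hrεε⟩ := hcsub hrεmem
  have hrε1 : rε < 1 := hrεmem.2
  have hrε0 : 0 < rε := by linarith
  have hrεne : rε ≠ 0 := ne_of_gt hrε0
  set cP := ((N:ℝ)-1)/rε * Real.sqrt (1+ε) with hcp
  set cM := ((N:ℝ)-1) * Real.sqrt (1-ε) with hcm
  have hcp0 : 0 ≤ cP := mul_nonneg (div_nonneg hN1 hrε0.le) (Real.sqrt_nonneg _)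
  have hcm0 : 0 ≤ cM := mul_nonneg hN1 (Real.sqrt_nonneg _)
  set aP := |g rε| + cP * |φ (u rε)| with hAp
  set aM := |g rε| + cM * |φ (u rε)| with hAm
  -- numeric facts about ε
  have hsqrt_up : Real.sqrt (1+ε) ≤ 1 + ε := eps_sqrt_up hε0.le
  have hsqrt_low : 1 - ε ≤ Real.sqrt (1-ε) := eps_sqrt_low hε0.le hεhalf
  have hconst_up : Real.sqrt (1+ε) / rε ≤ 1 + δ/2 := by
    have := eps_const_up hε0 hεhalf hrεε
    linarith
  filter_upwards [Ioo_mem_nhdsLT_of_mem (Set.right_mem_Ioc.2 hrε1),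
    hDtop.eventually_ge_atTop 1, hDtop.eventually_ge_atTop (|aP| * (4/δ)),
    hDtop.eventually_ge_atTop (|aM| * (4/δ)), hphiuTop.eventually_ge_atTop 1]
    with r hr hD1 hDaP hDaM hφ1
  have hrs : r ∈ s := ⟨hrεs.1.trans hr.1, hr.2⟩
  have hrεr : rε ≤ r := hr.1.le
  have hIccc : Icc rε r ⊆ Ioo c 1 :=
    fun x hx => ⟨lt_of_lt_of_le hrεmem.1 hx.1, lt_of_le_of_lt hx.2 hr.2⟩
  have hIcc : Icc rε r ⊆ s := fun x hx => ⟨lt_of_lt_of_le hrεs.1 hx.1, lt_of_le_of_lt hx.2 hr.2⟩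
  -- FTC for g on [rε, r]
  have hcont1 : ContinuousOn (fun x => ((N:ℝ)-1)/x * (deriv u x)^2) (Icc rε r) := by
    apply ContinuousOn.mul
    · exact continuousOn_const.div continuousOn_id
        (fun x hx => ne_of_gt (lt_of_lt_of_le hrε0 hx.1))
    · exact (hu'cont.mono hIcc).pow 2
  have hftc : ∫ x in rε..r, ((N:ℝ)-1)/x * (deriv u x)^2 = g r - g rε := by
    apply intervalIntegral.integral_eq_sub_of_hasDerivAt
    · rw [uIcc_of_le hrεr]; exact fun x hx => hgd x (hIcc hx)
    · apply ContinuousOn.intervalIntegrable; rw [uIcc_of_le hrεr]; exact hcont1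
  -- pointwise two-sided bounds
  have hptw : ∀ x ∈ Icc rε r,
      cM * (deriv u x * Real.sqrt (2 * F (u x))) ≤ ((N:ℝ)-1)/x * (deriv u x)^2 ∧
      ((N:ℝ)-1)/x * (deriv u x)^2 ≤ cP * (deriv u x * Real.sqrt (2 * F (u x))) := by
    intro x hx
    obtain ⟨hxs, hxa, hxq, hxF, hxε⟩ := hcsub (hIccc hx)
    have hd0 : 0 ≤ deriv u x := hu'nn x hxs
    have hFx : (0:ℝ) < F (u x) := lt_of_lt_of_le one_pos hxF
    have hgabs : |g x| ≤ ε * F (u x) := by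
      rw [abs_div, abs_of_pos hFx, div_le_iff₀ hFx] at hxq
      linarith [hxq]
    have hx1 : x ≤ 1 := hx.2.trans hr.2.le
    have hmain := my_ptw hN1 hrε0 hx.1 hx1 hd0 hxF hε0 hgabs (hg x)
    constructor
    · have h2 : cM * (deriv u x * Real.sqrt (2 * F (u x)))
          = ((N:ℝ)-1) * (Real.sqrt (1-ε) * (deriv u x * Real.sqrt (2 * F (u x)))) := by
        rw [hcm]; ring
      rw [h2]; exact hmain.1
    · have h2 : cP * (deriv u x * Real.sqrt (2 * F (u x)))
          = ((N:ℝ)-1)/rε * (Real.sqrt (1+ε) * (deriv u x * Real.sqrt (2 * F (u x)))) := by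
        rw [hcp]; ring
      rw [h2]; exact hmain.2
  -- substitution
  have hPcont : ContinuousOn (fun x => deriv u x * Real.sqrt (2 * F (u x))) (Icc rε r) :=
    (hu'cont.mono hIcc).mul (hsqc.comp_continuousOn (hucont.mono hIcc))
  have hsub : ∫ x in rε..r, deriv u x * Real.sqrt (2 * F (u x))
      = φ (u r) - φ (u rε) := by
    have h := intervalIntegral.integral_comp_smul_deriv (f := u) (f' := deriv u)
      (g := fun t => Real.sqrt (2 * F t)) (a := rε) (b := r)
      (by rw [uIcc_of_le hrεr]; exact fun x hx => hud x (hIcc hx))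
      (by rw [uIcc_of_le hrεr]; exact hu'cont.mono hIcc) hsqc
    have hadj : φ (u rε) + (∫ t in (u rε)..(u r), Real.sqrt (2 * F t)) = φ (u r) :=
      intervalIntegral.integral_add_adjacent_intervals (hsqc.intervalIntegrable _ _)
        (hsqc.intervalIntegrable _ _)
    have h' : ∫ x in rε..r, deriv u x * Real.sqrt (2 * F (u x))
        = ∫ t in (u rε)..(u r), Real.sqrt (2 * F t) := by
      simpa [smul_eq_mul, Function.comp] using h
    rw [h']; linarith
  -- two-sided integral bounds
  have hupint : g r - g rε ≤ cP * (φ (u r) - φ (u rε)) := by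
    rw [← hftc, ← hsub, ← intervalIntegral.integral_const_mul]
    apply intervalIntegral.integral_mono_on hrεr
    · apply ContinuousOn.intervalIntegrable; rw [uIcc_of_le hrεr]; exact hcont1
    · apply ContinuousOn.intervalIntegrable; rw [uIcc_of_le hrεr]
      exact continuousOn_const.mul hPcont
    · exact fun x hx => (hptw x hx).2
  have hlowint : cM * (φ (u r) - φ (u rε)) ≤ g r - g rε := by
    rw [← hftc, ← hsub, ← intervalIntegral.integral_const_mul]
    apply intervalIntegral.integral_mono_on hrεr
    · apply ContinuousOn.intervalIntegrable; rw [uIcc_of_le hrεr]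
      exact continuousOn_const.mul hPcont
    · apply ContinuousOn.intervalIntegrable; rw [uIcc_of_le hrεr]; exact hcont1
    · exact fun x hx => (hptw x hx).1
  -- final numerics
  have hΦ1 : (1:ℝ) ≤ φ (u r) := hφ1
  have hΦ0 : φ (u r) ≠ 0 := by linarith
  have hDpos : (0:ℝ) < ((N:ℝ)-1) * φ (u r) := lt_of_lt_of_le one_pos hD1
  have hAup : aP / (((N:ℝ)-1) * φ (u r)) ≤ δ/4 := by
    rw [div_le_iff₀ hDpos]
    have h := mul_le_mul_of_nonneg_left hDaP (le_of_lt (show (0:ℝ) < δ/4 by linarith))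
    have he : δ/4 * (|aP| * (4/δ)) = |aP| := by field_simp
    rw [he] at h
    have := le_abs_self aP
    linarith
  have hAlow : aM / (((N:ℝ)-1) * φ (u r)) ≤ δ/4 := by
    rw [div_le_iff₀ hDpos]
    have h := mul_le_mul_of_nonneg_left hDaM (le_of_lt (show (0:ℝ) < δ/4 by linarith))
    have he : δ/4 * (|aM| * (4/δ)) = |aM| := by field_simp
    rw [he] at h
    have := le_abs_self aM
    linarith
  have hup2 : g r / (((N:ℝ)-1) * φ (u r)) ≤ aP / (((N:ℝ)-1) * φ (u r)) + Real.sqrt (1+ε) / rε := by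
    have hb2' : -(cP * |φ (u rε)|) ≤ cP * φ (u rε) := by
      have := mul_le_mul_of_nonneg_left (neg_abs_le (φ (u rε))) hcp0
      rwa [mul_neg] at this
    have h1 : g r ≤ aP + cP * φ (u r) := by
      have hb1 := le_abs_self (g rε)
      rw [hAp]
      have hexp : cP * (φ (u r) - φ (u rε)) = cP * φ (u r) - cP * φ (u rε) := by ring
      rw [hexp] at hupint
      linarith
    have h2 : g r / (((N:ℝ)-1) * φ (u r)) ≤ (aP + cP * φ (u r))/(((N:ℝ)-1) * φ (u r)) :=
      (div_le_div_iff_of_pos_right hDpos).2 h1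
    have h3 : (aP + cP * φ (u r))/(((N:ℝ)-1) * φ (u r))
        = aP / (((N:ℝ)-1) * φ (u r)) + Real.sqrt (1+ε) / rε := by
      rw [hAp, hcp]; field_simp
    linarith
  have hlow2 : -(aM / (((N:ℝ)-1) * φ (u r))) + Real.sqrt (1-ε)
      ≤ g r / (((N:ℝ)-1) * φ (u r)) := by
    have hb2' : cM * φ (u rε) ≤ cM * |φ (u rε)| :=
      mul_le_mul_of_nonneg_left (le_abs_self _) hcm0
    have h1 : -aM + cM * φ (u r) ≤ g r := by
      have hb1 := neg_abs_le (g rε)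
      rw [hAm]
      have hexp : cM * (φ (u r) - φ (u rε)) = cM * φ (u r) - cM * φ (u rε) := by ring
      rw [hexp] at hlowint
      linarith
    have h2 : (-aM + cM * φ (u r))/(((N:ℝ)-1) * φ (u r)) ≤ g r / (((N:ℝ)-1) * φ (u r)) :=
      (div_le_div_iff_of_pos_right hDpos).2 h1
    have h3 : (-aM + cM * φ (u r))/(((N:ℝ)-1) * φ (u r))
        = -(aM / (((N:ℝ)-1) * φ (u r))) + Real.sqrt (1-ε) := by
      rw [hAm, hcm]; field_simp
    linarith
  rw [Real.dist_eq, abs_lt]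
  constructor
  · linarith
  · linarith
end

section
/- Let M ∈ ℝ and let F : [M,∞) → ℝ be continuous, nondecreasing and positive, such that t ↦ 1/√(2F(t)) is integrable on [M,∞) (i.e. ∫_M^{+∞} dt/√(2F(t)) < +∞). Then lim_{u→+∞} ( ∫_M^u √(2F(t)) dt ) / F(u) = 0; that is, any antiderivative G of √(2F) satisfies G(u) = o(F(u)) as u → +∞. -/
open MeasureTheory Filter Set

theorem stmt18 (M : ℝ) (F : ℝ → ℝ)
    (hcont : ContinuousOn F (Ici M))
    (hmono : MonotoneOn F (Ici M))
    (hpos : ∀ t ∈ Ici M, 0 < F t)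
    (hKO : IntegrableOn (fun t => 1 / Real.sqrt (2 * F t)) (Ici M)) :
    Filter.Tendsto (fun u => (∫ t in M..u, Real.sqrt (2 * F t)) / F u)
      Filter.atTop (nhds 0) := by
  set s : ℝ → ℝ := fun t => Real.sqrt (2 * F t) with hsdef
  set h : ℝ → ℝ := fun t => 1 / Real.sqrt (2 * F t) with hhdef
  have hF0 : 0 < F M := hpos M self_mem_Ici
  -- continuity of s
  have hscont : ContinuousOn s (Ici M) :=
    Real.continuous_sqrt.comp_continuousOn (continuousOn_const.mul hcont)
  have hsInt : ∀ a b, M ≤ a → a ≤ b → IntervalIntegrable s volume a b := by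
    intro a b ha hab
    apply ContinuousOn.intervalIntegrable
    apply hscont.mono
    rw [uIcc_of_le hab]
    exact fun x hx => le_trans ha hx.1
  have hhInt : ∀ a b, M ≤ a → a ≤ b → IntervalIntegrable h volume a b := by
    intro a b ha hab
    apply MeasureTheory.IntegrableOn.intervalIntegrable
    apply hKO.mono_set
    rw [uIcc_of_le hab]
    exact fun x hx => le_trans ha hx.1
  have hhnonneg : ∀ t, 0 ≤ h t := fun t => by positivity
  -- F tends to infinity
  have hFtop : Tendsto F atTop atTop := by
    rw [tendsto_atTop]
    intro b
    by_cases hb : ∃ u ∈ Ici M, b ≤ F u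
    · obtain ⟨u₀, hu₀, hbu₀⟩ := hb
      filter_upwards [eventually_ge_atTop u₀] with u hu
      exact hbu₀.trans (hmono hu₀ (le_trans hu₀ hu) hu)
    · exfalso
      push_neg at hb
      have hbpos : 0 < b := lt_trans hF0 (hb M self_mem_Ici)
      have hconst : IntegrableOn (fun _ : ℝ => 1 / Real.sqrt (2 * b)) (Ici M) := by
        apply hKO.mono' aestronglyMeasurable_const
        filter_upwards [ae_restrict_mem measurableSet_Ici] with t ht
        have hFt := hpos t ht
        rw [Real.norm_eq_abs, abs_of_nonneg (by positivity)]
        apply one_div_le_one_div_of_le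
        · exact Real.sqrt_pos.mpr (by positivity)
        · exact Real.sqrt_le_sqrt (by nlinarith [(hb t ht).le])
      rw [integrableOn_const_iff] at hconst
      rcases hconst with hc | hc
      · have h2b : (0:ℝ) < 1 / Real.sqrt (2 * b) := by positivity
        rw [enorm_eq_zero] at hc; rw [hc] at h2b; exact lt_irrefl 0 h2b
      · simp [Real.volume_Ici] at hc
  have hIoiM : IntegrableOn h (Ioi M) := hKO.mono_set Ioi_subset_Ici_self
  -- key pointwise/integral bound
  have key : ∀ A u, M ≤ A → A ≤ u →
      (∫ t in A..u, s t) ≤ 2 * F u * ∫ t in Ioi A, h t := by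
    intro A u hA hAu
    have hMu : M ≤ u := le_trans hA hAu
    have step1 : (∫ t in A..u, s t) ≤ ∫ t in A..u, 2 * F u * h t := by
      apply intervalIntegral.integral_mono_on hAu (hsInt A u hA hAu)
        ((hhInt A u hA hAu).const_mul _)
      intro t ht
      have htM : M ≤ t := le_trans hA ht.1
      have hFt : 0 < F t := hpos t htM
      have hst : 0 < s t := Real.sqrt_pos.mpr (by positivity)
      have hss : s t * s t = 2 * F t := Real.mul_self_sqrt (by positivity)
      have hFtu : F t ≤ F u := hmono htM hMu ht.2
      have : s t ≤ 2 * F u / s t := by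
        rw [le_div_iff₀ hst]
        nlinarith
      calc s t ≤ 2 * F u / s t := this
        _ = 2 * F u * h t := by rw [hhdef]; ring
    have step2 : (∫ t in A..u, h t) ≤ ∫ t in Ioi A, h t := by
      rw [intervalIntegral.integral_of_le hAu]
      apply setIntegral_mono_set (hIoiM.mono_set (Ioi_subset_Ioi hA))
      · exact Filter.Eventually.of_forall hhnonneg
      · exact HasSubset.Subset.eventuallyLE Ioc_subset_Ioi_self
    calc (∫ t in A..u, s t) ≤ ∫ t in A..u, 2 * F u * h t := step1
      _ = 2 * F u * ∫ t in A..u, h t := intervalIntegral.integral_const_mul _ _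
      _ ≤ 2 * F u * ∫ t in Ioi A, h t := by
          have hFu : 0 ≤ F u := (hpos u (le_trans hA hAu)).le
          nlinarith [step2]
  -- tail tends to zero
  have htail : Tendsto (fun A => ∫ t in Ioi A, h t) atTop (nhds 0) := by
    have h1 : Tendsto (fun A => ∫ t in M..A, h t) atTop (nhds (∫ t in Ioi M, h t)) :=
      intervalIntegral_tendsto_integral_Ioi M hIoiM tendsto_id
    have h2 : ∀ᶠ A in atTop, (∫ t in Ioi A, h t)
        = (∫ t in Ioi M, h t) - ∫ t in M..A, h t := by
      filter_upwards [eventually_ge_atTop M] with A hA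
      have hdisj : Disjoint (Ioc M A) (Ioi A) :=
        disjoint_left.mpr fun x hx hx' => absurd hx.2 (not_le.mpr hx')
      have hsplit : (∫ t in Ioi M, h t) = (∫ t in Ioc M A, h t) + ∫ t in Ioi A, h t := by
        rw [← setIntegral_union hdisj measurableSet_Ioi
          (hIoiM.mono_set Ioc_subset_Ioi_self) (hIoiM.mono_set (Ioi_subset_Ioi hA)),
          Ioc_union_Ioi_eq_Ioi hA]
      rw [intervalIntegral.integral_of_le hA]
      linarith
    rw [tendsto_congr' h2]
    simpa using Tendsto.const_sub (∫ t in Ioi M, h t) h1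
  -- main argument
  rw [NormedAddCommGroup.tendsto_nhds_zero]
  intro ε hε
  have hε4 : (0:ℝ) < ε / 4 := by linarith
  obtain ⟨A, hAM, hAtail⟩ : ∃ A, M ≤ A ∧ (∫ t in Ioi A, h t) < ε / 4 := by
    have := (eventually_ge_atTop M).and (htail.eventually_lt_const hε4)
    obtain ⟨A, h1, h2⟩ := this.exists
    exact ⟨A, h1, h2⟩
  set C := ∫ t in M..A, s t with hCdef
  have hCnonneg : 0 ≤ C :=
    intervalIntegral.integral_nonneg hAM (fun t _ => Real.sqrt_nonneg _)
  have hCsmall : ∀ᶠ u in atTop, C / F u < ε / 4 :=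
    (tendsto_const_nhds.div_atTop hFtop).eventually_lt_const hε4
  filter_upwards [eventually_ge_atTop A, hCsmall, hFtop.eventually_gt_atTop 0]
    with u hAu hCu hFu
  have hMu : M ≤ u := le_trans hAM hAu
  have hsplit : (∫ t in M..u, s t) = C + ∫ t in A..u, s t := by
    rw [hCdef, intervalIntegral.integral_add_adjacent_intervals
      (hsInt M A le_rfl hAM) (hsInt A u hAM hAu)]
  have hgnonneg : 0 ≤ ∫ t in M..u, s t :=
    intervalIntegral.integral_nonneg hMu (fun t _ => Real.sqrt_nonneg _)
  rw [Real.norm_eq_abs, abs_of_nonneg (div_nonneg hgnonneg hFu.le), div_lt_iff₀ hFu]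
  have hk := key A u hAM hAu
  have hC' : C < ε / 4 * F u := (div_lt_iff₀ hFu).mp hCu
  have htmp : 2 * F u * (∫ t in Ioi A, h t) ≤ 2 * F u * (ε / 4) := by
    nlinarith
  nlinarith [hsplit, hk, htmp]
end
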